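/- Let c be a real number with 0 < c < 1 and let d ≥ 2 be an integer with (d−1)/d ≤ c. Then for every k ≥ 1, every finite undirected simple d-regular graph G with girth strictly greater than 2k, and every pair of vertices v, w with dist(v, w) = k, the influences I^A = (A^k)_{vw} / Σ_u (A^k)_{vu} and I^B = N_k(v, w) / Σ_u N_k(v, u) satisfy I^A / I^B ≤ c^{k−1}, where A is the adjacency matrix of G and N_k(v, u) denotes the number of non-backtracking walks of length k from v to u. In particular, the adjacency-based influence decays exponentially faster in k than the non-backtracking influence. -/

import Mathlib

open Finset Matrix

/-- A walk is non-backtracking if it never immediately reverses an edge,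
i.e. `v_{i+2} ≠ v_i` for all applicable `i`. -/
def SimpleGraph.Walk.IsNonBacktracking {V : Type*} {G : SimpleGraph V} {u v : V}
    (p : G.Walk u v) : Prop :=
  ∀ i : ℕ, i + 2 ≤ p.length → p.getVert (i + 2) ≠ p.getVert i

namespace InfluenceAux

open SimpleGraph SimpleGraph.Walk

variable {V : Type} [Fintype V] [DecidableEq V] {G : SimpleGraph V} [DecidableRel G.Adj]

instance decNB {x u : V} (p : G.Walk x u) : Decidable p.IsNonBacktracking :=
  decidable_of_iff (∀ i < p.length, i + 2 ≤ p.length → p.getVert (i + 2) ≠ p.getVert i)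
    ⟨fun h i hi => h i (by omega) hi, fun h i _ hi => h i hi⟩

lemma nb_nil {x : V} : (Walk.nil : G.Walk x x).IsNonBacktracking := by
  intro i hi; simp at hi

lemma nb_cons_iff {x a u : V} (h : G.Adj x a) (q : G.Walk a u) :
    (Walk.cons h q).IsNonBacktracking ↔ q.IsNonBacktracking ∧ q.getVert 1 ≠ x := by
  constructor
  · intro hnb
    refine ⟨fun i hi => ?_, ?_⟩
    · have := hnb (i + 1) (by simp; omega)
      simpa [Walk.getVert_cons_succ] using this
    · rcases Nat.eq_zero_or_pos q.length with h0 | h0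
      · have h1 : q.getVert 1 = u := q.getVert_of_length_le (by omega)
        have h2 : q.getVert 0 = u := q.getVert_of_length_le (by omega)
        rw [Walk.getVert_zero] at h2
        rw [h1, ← h2]
        exact h.ne'
      · have := hnb 0 (by simp; omega)
        simpa [Walk.getVert_cons_succ, Walk.getVert_zero] using this
  · rintro ⟨hnb, h1⟩ i hi
    match i with
    | 0 =>
      simpa [Walk.getVert_cons_succ, Walk.getVert_zero] using h1
    | (j + 1) =>
      have := hnb j (by simp at hi; omega)
      simpa [Walk.getVert_cons_succ] using this

lemma getVert_mem_support {x u : V} (p : G.Walk x u) (n : ℕ) : p.getVert n ∈ p.support := by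
  rw [Walk.mem_support_iff_exists_getVert]
  rcases le_total n p.length with h | h
  · exact ⟨n, rfl, h⟩
  · exact ⟨p.length, by rw [Walk.getVert_length, p.getVert_of_length_le h], le_rfl⟩

lemma IsPath.nb {x u : V} {p : G.Walk x u} (hp : p.IsPath) : p.IsNonBacktracking := by
  induction p with
  | nil => exact nb_nil
  | cons h p ih =>
    rw [Walk.cons_isPath_iff] at hp
    refine (nb_cons_iff h p).mpr ⟨ih hp.1, fun hc => hp.2 (hc ▸ getVert_mem_support p 1)⟩

lemma isPath_of_length_eq_dist {v w : V} (p : G.Walk v w) (h : p.length = G.dist v w) :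
    p.IsPath := by
  induction p with
  | nil => exact Walk.IsPath.nil
  | @cons v a w hadj p ih =>
    have hle : G.dist a w ≤ p.length := SimpleGraph.dist_le p
    have hr : G.Reachable a w := p.reachable
    obtain ⟨s, hs⟩ := hr.exists_walk_length_eq_dist
    have h2 : G.dist v w ≤ G.dist a w + 1 := by
      have := SimpleGraph.dist_le (Walk.cons hadj s)
      simpa [hs] using this
    simp only [Walk.length_cons] at h
    have hdaw : G.dist a w = p.length := by omega
    have hp : p.IsPath := ih hdaw.symm
    rw [Walk.cons_isPath_iff]
    refine ⟨hp, fun hv => ?_⟩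
    have := SimpleGraph.dist_le ((p.dropUntil v hv))
    have hlen := Walk.length_dropUntil_le p hv
    omega

lemma path_unique (k : ℕ)
    (hg : ∀ (a : V) (c : G.Walk a a), c.IsCycle → 2 * k < c.length) :
    ∀ {v w : V} (p : G.Walk v w), p.IsPath → p.length ≤ k →
      ∀ q : G.Walk v w, q.IsPath → q.length ≤ k → p = q := by
  intro v w p
  induction p with
  | nil =>
    intro _ _ q hq _
    exact (Walk.isPath_iff_eq_nil.mp hq).symm
  | @cons v a w h p ih =>
    intro hp hplen q hq hqlen
    cases q with
    | nil =>
      exact absurd (Walk.isPath_iff_eq_nil.mp hp) (by simp)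
    | @cons _ b _ h' q =>
      rw [Walk.cons_isPath_iff] at hp hq
      simp only [Walk.length_cons] at hplen hqlen
      by_cases hab : a = b
      · subst hab
        have : p = q := ih hp.1 (by omega) q hq.1 (by omega)
        rw [this]
      · exfalso
        set r := (p.append q.reverse).bypass with hr
        have hr_path : r.IsPath := Walk.bypass_isPath _
        have hr_len : r.length ≤ p.length + q.length := by
          calc r.length ≤ (p.append q.reverse).length := Walk.length_bypass_le _
            _ = p.length + q.length := by simp
        have hvr : v ∉ r.support := by
          intro hv
          have hmem := Walk.support_bypass_subset _ hv
          rw [Walk.support_append] at hmem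
          rcases List.mem_append.mp hmem with hm | hm
          · exact hp.2 hm
          · have : v ∈ q.reverse.support := List.mem_of_mem_tail hm
            rw [Walk.support_reverse] at this
            exact hq.2 (List.mem_reverse.mp this)
        have hconc : (r.concat h'.symm).IsPath := by
          rw [Walk.isPath_def, Walk.support_concat]
          rw [List.nodup_append]
          refine ⟨hr_path.support_nodup, List.nodup_singleton _, ?_⟩
          intro x hx y hx'
          simp only [List.mem_singleton] at hx'
          subst hx'
          rintro rfl
          exact hvr hx
        have hedge : s(v, a) ∉ (r.concat h'.symm).edges := by
          rw [Walk.edges_concat]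
          intro hmem
          rw [List.concat_eq_append, List.mem_append] at hmem
          rcases hmem with hm | hm
          · exact hvr (Walk.fst_mem_support_of_mem_edges r hm)
          · rw [List.mem_singleton] at hm
            rw [Sym2.eq_iff] at hm
            rcases hm with ⟨rfl, rfl⟩ | ⟨h1, h2⟩
            · exact h.ne rfl
            · exact hab h2
        have hcyc : (Walk.cons h (r.concat h'.symm)).IsCycle :=
          (Walk.cons_isCycle_iff _ _).mpr ⟨hconc, hedge⟩
        have := hg v _ hcyc
        simp only [Walk.length_cons, Walk.length_concat] at this
        omega

/-- The sigma type of non-backtracking walks of length `n` from `x` whose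
first step avoids `y`. -/
abbrev Sig (G : SimpleGraph V) (x y : V) (n : ℕ) : Type :=
  Σ u : V, {p : G.Walk x u // p.length = n ∧ p.IsNonBacktracking ∧ p.getVert 1 ≠ y}

/-- The sigma type of all non-backtracking walks of length `n` from `x`. -/
abbrev Tot (G : SimpleGraph V) (x : V) (n : ℕ) : Type :=
  Σ u : V, {p : G.Walk x u // p.length = n ∧ p.IsNonBacktracking}

instance fintypeSubNBAvoid (x u y : V) (n : ℕ) :
    Fintype {p : G.Walk x u // p.length = n ∧ p.IsNonBacktracking ∧ p.getVert 1 ≠ y} :=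
  Fintype.ofEquiv
    {q : {p : G.Walk x u // p.length = n} // q.1.IsNonBacktracking ∧ q.1.getVert 1 ≠ y}
    ((Equiv.subtypeSubtypeEquivSubtypeInter
        (fun p : G.Walk x u => p.length = n)
        (fun p : G.Walk x u => p.IsNonBacktracking ∧ p.getVert 1 ≠ y)).trans
      (Equiv.subtypeEquivRight (by tauto)))

instance fintypeSubNB (x u : V) (n : ℕ) :
    Fintype {p : G.Walk x u // p.length = n ∧ p.IsNonBacktracking} :=
  Fintype.ofEquiv
    {q : {p : G.Walk x u // p.length = n} // q.1.IsNonBacktracking}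
    ((Equiv.subtypeSubtypeEquivSubtypeInter
        (fun p : G.Walk x u => p.length = n)
        (fun p : G.Walk x u => p.IsNonBacktracking)).trans
      (Equiv.subtypeEquivRight (by tauto)))

def extend (x y : V) (n : ℕ) :
    (Σ a : {a : V // G.Adj x a ∧ a ≠ y}, Sig G a.1 x n) → Sig G x y (n + 1)
  | ⟨⟨a, ha⟩, ⟨u, q, hq⟩⟩ =>
    ⟨u, Walk.cons ha.1 q, by simp [hq.1], (nb_cons_iff ha.1 q).mpr ⟨hq.2.1, hq.2.2⟩,
      by rw [Walk.getVert_cons_succ, Walk.getVert_zero]; exact ha.2⟩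

def extendT (x : V) (n : ℕ) :
    (Σ a : {a : V // G.Adj x a}, Sig G a.1 x n) → Tot G x (n + 1)
  | ⟨⟨a, ha⟩, ⟨u, q, hq⟩⟩ =>
    ⟨u, Walk.cons ha q, by simp [hq.1], (nb_cons_iff ha q).mpr ⟨hq.2.1, hq.2.2⟩⟩

lemma extend_bijective (x y : V) (n : ℕ) :
    Function.Bijective (extend (G := G) x y n) := by
  constructor
  · rintro ⟨⟨a, ha⟩, ⟨u, q, hq⟩⟩ ⟨⟨a', ha'⟩, ⟨u', q', hq'⟩⟩ heq
    simp only [extend] at heq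
    obtain ⟨rfl, h2⟩ := Sigma.mk.inj_iff.mp heq
    have h3 : Walk.cons ha.1 q = Walk.cons ha'.1 q' := Subtype.ext_iff.mp (eq_of_heq h2)
    injection h3 with e1 e2 e3 e4
    subst e2
    obtain rfl : q = q' := eq_of_heq e4
    rfl
  · rintro ⟨u, p, hlen, hnb, h1⟩
    have hnp : ¬ p.Nil := by rw [Walk.nil_iff_length_eq]; omega
    have ha : G.Adj x (p.getVert 1) := Walk.adj_snd hnp
    have hc : Walk.cons ha p.tail = p := Walk.cons_tail_eq p hnp
    have htail : (Walk.cons ha p.tail).IsNonBacktracking := by rw [hc]; exact hnb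
    obtain ⟨hnb', h1'⟩ := (nb_cons_iff ha p.tail).mp htail
    have hlen' : p.tail.length = n := by
      have := Walk.length_tail_add_one hnp; omega
    exact ⟨⟨⟨p.getVert 1, ha, h1⟩, ⟨u, p.tail, hlen', hnb', h1'⟩⟩,
      Sigma.ext rfl (heq_of_eq (Subtype.ext hc))⟩

lemma extendT_bijective (x : V) (n : ℕ) :
    Function.Bijective (extendT (G := G) x n) := by
  constructor
  · rintro ⟨⟨a, ha⟩, ⟨u, q, hq⟩⟩ ⟨⟨a', ha'⟩, ⟨u', q', hq'⟩⟩ heq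
    simp only [extendT] at heq
    obtain ⟨rfl, h2⟩ := Sigma.mk.inj_iff.mp heq
    have h3 : Walk.cons ha q = Walk.cons ha' q' := Subtype.ext_iff.mp (eq_of_heq h2)
    injection h3 with e1 e2 e3 e4
    subst e2
    obtain rfl : q = q' := eq_of_heq e4
    rfl
  · rintro ⟨u, p, hlen, hnb⟩
    have hnp : ¬ p.Nil := by rw [Walk.nil_iff_length_eq]; omega
    have ha : G.Adj x (p.getVert 1) := Walk.adj_snd hnp
    have hc : Walk.cons ha p.tail = p := Walk.cons_tail_eq p hnp
    have htail : (Walk.cons ha p.tail).IsNonBacktracking := by rw [hc]; exact hnb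
    obtain ⟨hnb', h1'⟩ := (nb_cons_iff ha p.tail).mp htail
    have hlen' : p.tail.length = n := by
      have := Walk.length_tail_add_one hnp; omega
    exact ⟨⟨⟨p.getVert 1, ha⟩, ⟨u, p.tail, hlen', hnb', h1'⟩⟩,
      Sigma.ext rfl (heq_of_eq (Subtype.ext hc))⟩

variable {d : ℕ}

lemma card_neighbors_avoid (hreg : G.IsRegularOfDegree d) (x y : V) (hxy : G.Adj x y) :
    Fintype.card {a : V // G.Adj x a ∧ a ≠ y} = d - 1 := by
  rw [Fintype.card_subtype]
  have h : Finset.univ.filter (fun a => G.Adj x a ∧ a ≠ y) = (G.neighborFinset x).erase y := by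
    ext a
    simp [SimpleGraph.mem_neighborFinset, and_comm]
  rw [h, Finset.card_erase_of_mem ((G.mem_neighborFinset x y).mpr hxy),
    SimpleGraph.card_neighborFinset_eq_degree, hreg x]

lemma card_neighbors (hreg : G.IsRegularOfDegree d) (x : V) :
    Fintype.card {a : V // G.Adj x a} = d := by
  rw [Fintype.card_subtype]
  have h : Finset.univ.filter (fun a => G.Adj x a) = G.neighborFinset x := by
    ext a
    simp [SimpleGraph.mem_neighborFinset]
  rw [h, SimpleGraph.card_neighborFinset_eq_degree, hreg x]

lemma card_Sig (hreg : G.IsRegularOfDegree d) :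
    ∀ (n : ℕ) (x y : V), G.Adj x y → Fintype.card (Sig G x y n) = (d - 1) ^ n := by
  intro n
  induction n with
  | zero =>
    intro x y hxy
    rw [pow_zero, Fintype.card_eq_one_iff]
    refine ⟨⟨x, Walk.nil, rfl, nb_nil, ?_⟩, ?_⟩
    · rw [Walk.getVert_of_length_le _ (by simp)]
      exact hxy.ne
    · rintro ⟨u, p, hlen, hx1, hx2⟩
      obtain rfl : x = u := Walk.eq_of_length_eq_zero hlen
      obtain rfl : p = Walk.nil := Walk.nil_iff_eq_nil.mp (Walk.length_eq_zero_iff.mp hlen)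
      rfl
  | succ n ih =>
    intro x y hxy
    rw [← Fintype.card_of_bijective (extend_bijective (G := G) x y n), Fintype.card_sigma]
    rw [Finset.sum_congr rfl (fun a _ => ih a.1 x a.2.1.symm), Finset.sum_const, smul_eq_mul,
      Finset.card_univ, card_neighbors_avoid hreg x y hxy, pow_succ]
    ring

lemma card_Tot (hreg : G.IsRegularOfDegree d) (x : V) (n : ℕ) :
    Fintype.card (Tot G x (n + 1)) = d * (d - 1) ^ n := by
  rw [← Fintype.card_of_bijective (extendT_bijective (G := G) x n), Fintype.card_sigma]
  rw [Finset.sum_congr rfl (fun a _ => card_Sig hreg n a.1 x a.2.symm), Finset.sum_const,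
    smul_eq_mul, Finset.card_univ, card_neighbors hreg x]

lemma row_sum (hreg : G.IsRegularOfDegree d) (k : ℕ) (v : V) :
    ∑ u : V, (G.adjMatrix ℝ ^ k) v u = (d : ℝ) ^ k := by
  induction k with
  | zero => simp [Matrix.one_apply]
  | succ n ih =>
    have hrow : ∀ x : V, ∑ u : V, G.adjMatrix ℝ x u = (d : ℝ) := by
      intro x
      simp only [SimpleGraph.adjMatrix_apply]
      rw [Finset.sum_boole]
      have h : Finset.univ.filter (fun u => G.Adj x u) = G.neighborFinset x := by
        ext u
        simp [SimpleGraph.mem_neighborFinset]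
      rw [h, SimpleGraph.card_neighborFinset_eq_degree, hreg x]
    rw [pow_succ]
    simp only [Matrix.mul_apply]
    rw [Finset.sum_comm]
    have h2 : ∀ x : V, (∑ u : V, (G.adjMatrix ℝ ^ n) v x * G.adjMatrix ℝ x u)
        = (G.adjMatrix ℝ ^ n) v x * (d : ℝ) := fun x => by
      rw [← Finset.mul_sum, hrow x]
    rw [Finset.sum_congr rfl fun x _ => h2 x, ← Finset.sum_mul, ih, ← pow_succ]

end InfluenceAux

theorem influence_decay_exponentially_faster
    (c : ℝ) (hc0 : 0 < c) (hc1 : c < 1)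
    (d : ℕ) (hd : 2 ≤ d) (hdc : ((d : ℝ) - 1) / (d : ℝ) ≤ c) :
    ∀ (k : ℕ), 1 ≤ k →
    ∀ (V : Type) [Fintype V] [DecidableEq V]
      (G : SimpleGraph V) [DecidableRel G.Adj],
      G.IsRegularOfDegree d →
      (2 * k : ℕ∞) < G.girth →
      ∀ v w : V, G.dist v w = k →
        (((G.adjMatrix ℝ ^ k) v w) / ∑ u : V, (G.adjMatrix ℝ ^ k) v u) /
          ((Nat.card {p : G.Walk v w // p.length = k ∧ p.IsNonBacktracking} : ℝ) /
            ∑ u : V, (Nat.card {p : G.Walk v u // p.length = k ∧ p.IsNonBacktracking} : ℝ))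
        ≤ c ^ (k - 1) := by
  intro k hk V _ _ G _ hreg hgirth v w hdist
  classical
  obtain ⟨m, rfl⟩ : ∃ m, k = m + 1 := ⟨k - 1, by omega⟩
  have hcyc : ∀ (a : V) (cw : G.Walk a a), cw.IsCycle → 2 * (m + 1) < cw.length := by
    intro a cw hcw
    have hnac : ¬ G.IsAcyclic := fun hac => hac cw hcw
    have h1 : G.egirth ≤ cw.length := SimpleGraph.le_egirth.mp le_rfl a cw hcw
    have h2 : (G.girth : ℕ∞) = G.egirth :=
      ENat.coe_toNat (by rw [ne_eq, SimpleGraph.egirth_eq_top]; exact hnac)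
    have h3 : (2 * (m + 1) : ℕ∞) < (cw.length : ℕ∞) := lt_of_lt_of_le (h2 ▸ hgirth) h1
    exact_mod_cast h3
  have hdne : G.dist v w ≠ 0 := by omega
  obtain ⟨p₀, hp₀len⟩ := SimpleGraph.exists_walk_of_dist_ne_zero hdne
  rw [hdist] at hp₀len
  have hp₀path : p₀.IsPath := InfluenceAux.isPath_of_length_eq_dist p₀ (by rw [hp₀len, hdist])
  have huniq : ∀ q : G.Walk v w, q.length = m + 1 → q = p₀ := fun q hq =>
    InfluenceAux.path_unique (m + 1) hcyc q
      (InfluenceAux.isPath_of_length_eq_dist q (by rw [hq, hdist])) (le_of_eq hq)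
      p₀ hp₀path (le_of_eq hp₀len)
  have hcard : Fintype.card {p : G.Walk v w | p.length = m + 1} = 1 :=
    Fintype.card_eq_one_iff.mpr ⟨⟨p₀, hp₀len⟩, fun q => Subtype.ext (huniq q.1 q.2)⟩
  have hNB : Nat.card {p : G.Walk v w // p.length = m + 1 ∧ p.IsNonBacktracking} = 1 := by
    rw [Nat.card_eq_one_iff_unique]
    exact ⟨⟨fun a b => Subtype.ext ((huniq a.1 a.2.1).trans (huniq b.1 b.2.1).symm)⟩,
      ⟨⟨p₀, hp₀len, InfluenceAux.IsPath.nb hp₀path⟩⟩⟩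
  have hSB : ∑ u : V, (Nat.card {p : G.Walk v u // p.length = m + 1 ∧ p.IsNonBacktracking})
      = d * (d - 1) ^ m := by
    have htot := InfluenceAux.card_Tot hreg v m
    rw [Fintype.card_sigma] at htot
    rw [← htot]
    exact Finset.sum_congr rfl fun u _ => Nat.card_eq_fintype_card
  rw [SimpleGraph.adjMatrix_pow_apply_eq_card_walk, hcard, Nat.cast_one,
    InfluenceAux.row_sum hreg (m + 1) v, hNB, Nat.cast_one, ← Nat.cast_sum, hSB]
  have hd2 : (2 : ℝ) ≤ (d : ℝ) := by exact_mod_cast hd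
  have hd0 : (0 : ℝ) < (d : ℝ) := by linarith
  have hd1 : (0 : ℝ) < (d : ℝ) - 1 := by linarith
  have hcast : ((d * (d - 1) ^ m : ℕ) : ℝ) = (d : ℝ) * ((d : ℝ) - 1) ^ m := by
    push_cast [Nat.cast_sub (by omega : 1 ≤ d)]
    ring
  rw [hcast, Nat.add_sub_cancel]
  have key : (1 / (d : ℝ) ^ (m + 1)) / (1 / ((d : ℝ) * ((d : ℝ) - 1) ^ m))
      = (((d : ℝ) - 1) / (d : ℝ)) ^ m := by
    rw [div_pow]
    field_simp
    ring
  rw [key]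
  exact pow_le_pow_left₀ (by positivity) hdc m
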